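/- Let (f_p) be a sequence of analytic functions on ℂ⁺ with |f_p(z)| ≤ C/Im(z) for all p and all z ∈ ℂ⁺. Suppose f_p(z) converges as p → ∞ for every z in the region {z ∈ ℂ⁺ : |Re(z)| ≤ Im(z), Im(z) > T} for some T > 0. Then f_p converges pointwise on all of ℂ⁺ to an analytic function f, uniformly on compact subsets of ℂ⁺. -/

import Mathlib

open Complex Filter

set_option maxHeartbeats 1000000 in
open Metric MeasureTheory intervalIntegral in
/-- Tannery-type lemma: if analytic functions on a closed ball are uniformly bounded and
converge pointwise on a small circle inside the ball, they converge uniformly on any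
strictly smaller closed ball. -/
lemma ball_uniform_conv (f : ℕ → ℂ → ℂ) (c : ℂ) (r R R' M : ℝ)
    (hr : 0 < r) (hrR : r < R) (hR'0 : 0 ≤ R') (hR'R : R' < R) (hM0 : 0 ≤ M)
    (han : ∀ p, DifferentiableOn ℂ (f p) (closedBall c R))
    (hbd : ∀ p, ∀ z ∈ closedBall c R, ‖f p z‖ ≤ M)
    (hcv : ∀ θ : ℝ, ∃ l, Tendsto (fun p => f p (circleMap c r θ)) atTop (nhds l)) :
    ∃ G : ℂ → ℂ, TendstoUniformlyOn (fun p => f p) G atTop (closedBall c R') := by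
  have hR : 0 < R := hr.trans hrR
  have hπ : (0:ℝ) < 2 * Real.pi := Real.two_pi_pos
  set Rn : NNReal := ⟨R, hR.le⟩ with hRn
  set rn : NNReal := ⟨r, hr.le⟩ with hrn
  have hps : ∀ p, HasFPowerSeriesOnBall (f p) (cauchyPowerSeries (f p) c R) c Rn :=
    fun p => DifferentiableOn.hasFPowerSeriesOnBall (R := Rn) (han p) hR
  have hpsr : ∀ p, HasFPowerSeriesOnBall (f p) (cauchyPowerSeries (f p) c r) c rn :=
    fun p => DifferentiableOn.hasFPowerSeriesOnBall (R := rn)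
      ((han p).mono (closedBall_subset_closedBall hrR.le)) hr
  obtain ⟨a, ha⟩ : ∃ a : ℕ → ℕ → ℂ,
      ∀ p n, a p n = (cauchyPowerSeries (f p) c R).coeff n := ⟨_, fun _ _ => rfl⟩
  have hae : ∀ p n, a p n = (cauchyPowerSeries (f p) c r).coeff n := by
    intro p n
    have h := (hps p).hasFPowerSeriesAt.eq_formalMultilinearSeries
      (hpsr p).hasFPowerSeriesAt
    rw [ha, h]
  -- continuity of f p on circles
  have hcf : ∀ p (ρ : ℝ), 0 < ρ → ρ ≤ R → Continuous fun θ => f p (circleMap c ρ θ) := by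
    intro p ρ h1 h2
    apply (han p).continuousOn.comp_continuous (continuous_circleMap c ρ)
    intro θ
    have := circleMap_mem_sphere c h1.le θ
    exact closedBall_subset_closedBall h2 (sphere_subset_closedBall this)
  have hcircle_mem : ∀ (ρ : ℝ), 0 < ρ → ρ ≤ R → ∀ θ : ℝ,
      circleMap c ρ θ ∈ closedBall c R := fun ρ h1 h2 θ =>
    closedBall_subset_closedBall h2 (sphere_subset_closedBall (circleMap_mem_sphere c h1.le θ))
  -- coefficient bound
  have hbnd : ∀ p n, ‖a p n‖ ≤ M / R ^ n := by
    intro p n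
    have h1 : ‖a p n‖ ≤ ‖cauchyPowerSeries (f p) c R n‖ := by
      rw [ha]
      have h := (cauchyPowerSeries (f p) c R n).le_opNorm 1
      simp only [Pi.one_apply, norm_one, Finset.prod_const_one, mul_one] at h
      exact h
    have h2 := norm_cauchyPowerSeries_le (f p) c R n
    have hint : (∫ θ in (0:ℝ)..2 * Real.pi, ‖f p (circleMap c R θ)‖) ≤ 2 * Real.pi * M := by
      have hi1 : IntervalIntegrable (fun θ => ‖f p (circleMap c R θ)‖) volume 0 (2 * Real.pi) :=
        ((hcf p R hR le_rfl).norm).intervalIntegrable _ _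
      have hi2 : IntervalIntegrable (fun _ : ℝ => M) volume 0 (2 * Real.pi) :=
        intervalIntegrable_const
      calc (∫ θ in (0:ℝ)..2 * Real.pi, ‖f p (circleMap c R θ)‖)
          ≤ ∫ _ in (0:ℝ)..2 * Real.pi, M := by
            apply intervalIntegral.integral_mono_on hπ.le hi1 hi2
            intro θ _
            exact hbd p _ (hcircle_mem R hR le_rfl θ)
        _ = 2 * Real.pi * M := by simp [mul_comm]
    calc ‖a p n‖ ≤ ((2 * Real.pi)⁻¹ * ∫ θ in (0:ℝ)..2 * Real.pi,
          ‖f p (circleMap c R θ)‖) * |R|⁻¹ ^ n := h1.trans h2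
      _ ≤ ((2 * Real.pi)⁻¹ * (2 * Real.pi * M)) * |R|⁻¹ ^ n := by
          have : (0:ℝ) ≤ (2 * Real.pi)⁻¹ := by positivity
          gcongr
      _ = M / R ^ n := by
          rw [abs_of_pos hR, inv_mul_cancel_left₀ hπ.ne']
          rw [div_eq_mul_inv, inv_pow]
  -- limit on small circle
  have hℓ : ∀ θ : ℝ, Tendsto (fun p => f p (circleMap c r θ)) atTop
      (nhds (limUnder atTop (fun p => f p (circleMap c r θ)))) := by
    intro θ
    obtain ⟨l, hl⟩ := hcv θ
    rwa [hl.limUnder_eq]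
  -- coefficient convergence via dominated convergence
  have hLconv : ∀ n : ℕ, ∃ Ln : ℂ, Tendsto (fun p => a p n) atTop (nhds Ln) := by
    intro n
    have hform : ∀ p, a p n = (2 * Real.pi * I : ℂ)⁻¹ •
        ∫ θ in (0:ℝ)..2 * Real.pi, (circleMap 0 r θ * I) •
          ((circleMap c r θ - c)⁻¹ ^ n • (circleMap c r θ - c)⁻¹ •
            f p (circleMap c r θ)) := by
      intro p
      rw [hae p n]
      simp only [cauchyPowerSeries, FormalMultilinearSeries.coeff,
        ContinuousMultilinearMap.mkPiRing_apply, Finset.prod_const, circleIntegral,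
        deriv_circleMap]
      simp [smul_comm ((2 * Real.pi * I : ℂ)⁻¹)]
    have hnz : ∀ θ : ℝ, circleMap 0 r θ ≠ 0 := fun θ => circleMap_ne_center hr.ne'
    have hmain : Tendsto (fun p => ∫ θ in (0:ℝ)..2 * Real.pi, (circleMap 0 r θ * I) •
          ((circleMap c r θ - c)⁻¹ ^ n • (circleMap c r θ - c)⁻¹ •
            f p (circleMap c r θ))) atTop
        (nhds (∫ θ in (0:ℝ)..2 * Real.pi, (circleMap 0 r θ * I) •
          ((circleMap c r θ - c)⁻¹ ^ n • (circleMap c r θ - c)⁻¹ •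
            limUnder atTop (fun p => f p (circleMap c r θ))))) := by
      apply intervalIntegral.tendsto_integral_filter_of_dominated_convergence
        (fun _ => r⁻¹ ^ n * M)
      · filter_upwards with p
        apply Continuous.aestronglyMeasurable
        have h1 : Continuous fun θ : ℝ => circleMap 0 r θ * I :=
          (continuous_circleMap 0 r).mul continuous_const
        have h2 : Continuous fun θ : ℝ => (circleMap c r θ - c)⁻¹ := by
          have : Continuous fun θ : ℝ => circleMap c r θ - c :=
            (continuous_circleMap c r).sub continuous_const
          exact this.inv₀ (fun θ => by rw [circleMap_sub_center]; exact hnz θ)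
        exact h1.smul ((h2.pow n).smul (h2.smul (hcf p r hr hrR.le)))
      · filter_upwards with p
        filter_upwards with θ
        intro _
        have hf := hbd p _ (hcircle_mem r hr hrR.le θ)
        have habs : ‖circleMap 0 r θ‖ = r := by
          simp [hr.le, abs_of_pos hr]
        rw [circleMap_sub_center]
        simp only [norm_smul, norm_mul, Complex.norm_I, mul_one,
          norm_pow, norm_inv, habs]
        calc r * (r⁻¹ ^ n * (r⁻¹ * ‖f p (circleMap c r θ)‖))
            ≤ r * (r⁻¹ ^ n * (r⁻¹ * M)) := by gcongr
          _ = r⁻¹ ^ n * (r * r⁻¹ * M) := by ring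
          _ = r⁻¹ ^ n * M := by rw [mul_inv_cancel₀ hr.ne', one_mul]
      · exact intervalIntegrable_const
      · filter_upwards with θ
        intro _
        exact (((hℓ θ).const_smul ((circleMap c r θ - c)⁻¹)).const_smul
          ((circleMap c r θ - c)⁻¹ ^ n)).const_smul (circleMap 0 r θ * I)
    exact ⟨_, by simpa only [← hform] using hmain.const_smul ((2 * Real.pi * I : ℂ)⁻¹)⟩
  choose L hL using hLconv
  have hLbnd : ∀ n, ‖L n‖ ≤ M / R ^ n :=
    fun n => le_of_tendsto (hL n).norm (Eventually.of_forall fun p => hbnd p n)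
  -- Tannery argument
  set q : ℝ := R' / R with hq
  have hq0 : 0 ≤ q := div_nonneg hR'0 hR.le
  have hq1 : q < 1 := (div_lt_one hR).2 hR'R
  set G : ℂ → ℂ := fun z => ∑' n : ℕ, (z - c) ^ n • L n with hG
  refine ⟨G, ?_⟩
  have hterm : ∀ (y : ℂ), ‖y‖ ≤ R' → ∀ n, ‖y ^ n • L n‖ ≤ M * q ^ n := by
    intro y hy n
    rw [norm_smul, norm_pow]
    calc ‖y‖ ^ n * ‖L n‖ ≤ R' ^ n * (M / R ^ n) := by
          gcongr
          exact hLbnd n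
      _ = M * q ^ n := by rw [hq, div_pow]; field_simp
  have hterm2 : ∀ (p : ℕ) (y : ℂ), ‖y‖ ≤ R' → ∀ n,
      ‖y ^ n • (L n - a p n)‖ ≤ 2 * M * q ^ n := by
    intro p y hy n
    rw [norm_smul, norm_pow]
    calc ‖y‖ ^ n * ‖L n - a p n‖ ≤ R' ^ n * (M / R ^ n + M / R ^ n) :=
          mul_le_mul (pow_le_pow_left₀ (norm_nonneg y) hy n)
            ((norm_sub_le _ _).trans (add_le_add (hLbnd n) (hbnd p n)))
            (norm_nonneg _) (by positivity)
      _ = 2 * M * q ^ n := by rw [hq, div_pow]; field_simp; ring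
  have hgeom : Summable fun n : ℕ => q ^ n := summable_geometric_of_lt_one hq0 hq1
  -- key estimate
  have key : ∀ (N p : ℕ) (z : ℂ), z ∈ closedBall c R' →
      ‖G z - f p z‖ ≤ (∑ n ∈ Finset.range N, ‖L n - a p n‖ * R' ^ n)
        + 2 * M * q ^ N * (1 - q)⁻¹ := by
    intro N p z hz
    set y : ℂ := z - c with hy
    have hyn : ‖y‖ ≤ R' := by rwa [mem_closedBall_iff_norm] at hz
    have hfz : HasSum (fun n => y ^ n • a p n) (f p z) := by
      have hyball : y ∈ Metric.eball (0:ℂ) Rn := by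
        rw [EMetric.mem_ball, edist_zero_right, enorm_eq_nnnorm, ← ENNReal.coe_lt_coe.symm]
        · exact_mod_cast (show ‖y‖ < R from hyn.trans_lt hR'R)
      have := (hps p).hasSum hyball
      simp only [FormalMultilinearSeries.apply_eq_pow_smul_coeff, ← ha] at this
      simpa [hy] using this
    have hsumnorm : Summable fun n => ‖y ^ n • (L n - a p n)‖ :=
      Summable.of_nonneg_of_le (fun n => norm_nonneg _) (hterm2 p y hyn)
        (hgeom.mul_left (2 * M))
    have hsumL : Summable fun n => y ^ n • L n :=
      Summable.of_norm_bounded (hgeom.mul_left M) (hterm y hyn)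
    have hGz : HasSum (fun n => y ^ n • L n) (G z) := hsumL.hasSum
    have hdiff : HasSum (fun n => y ^ n • (L n - a p n)) (G z - f p z) := by
      simpa [smul_sub, mul_sub] using hGz.sub hfz
    have h1 : ‖G z - f p z‖ ≤ ∑' n, ‖y ^ n • (L n - a p n)‖ := by
      rw [← hdiff.tsum_eq]
      exact norm_tsum_le_tsum_norm hsumnorm
    have hsplit := Summable.sum_add_tsum_nat_add (f := fun n => ‖y ^ n • (L n - a p n)‖) N hsumnorm
    have htail : (∑' i : ℕ, ‖y ^ (i + N) • (L (i + N) - a p (i + N))‖)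
        ≤ 2 * M * q ^ N * (1 - q)⁻¹ := by
      have hb : ∀ i : ℕ, ‖y ^ (i + N) • (L (i + N) - a p (i + N))‖
          ≤ (2 * M * q ^ N) * q ^ i := by
        intro i
        calc ‖y ^ (i + N) • (L (i + N) - a p (i + N))‖ ≤ 2 * M * q ^ (i + N) :=
            hterm2 p y hyn (i + N)
          _ = (2 * M * q ^ N) * q ^ i := by rw [pow_add]; ring
      calc (∑' i : ℕ, ‖y ^ (i + N) • (L (i + N) - a p (i + N))‖)
          ≤ ∑' i : ℕ, (2 * M * q ^ N) * q ^ i :=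
            Summable.tsum_le_tsum hb ((summable_nat_add_iff N).2 hsumnorm)
              (hgeom.mul_left _)
        _ = 2 * M * q ^ N * (1 - q)⁻¹ := by
            rw [tsum_mul_left, tsum_geometric_of_lt_one hq0 hq1]
    have hhead : (∑ n ∈ Finset.range N, ‖y ^ n • (L n - a p n)‖)
        ≤ ∑ n ∈ Finset.range N, ‖L n - a p n‖ * R' ^ n := by
      apply Finset.sum_le_sum
      intro n _
      rw [norm_smul, norm_pow, mul_comm]
      gcongr
    calc ‖G z - f p z‖ ≤ ∑' n, ‖y ^ n • (L n - a p n)‖ := h1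
      _ = (∑ n ∈ Finset.range N, ‖y ^ n • (L n - a p n)‖)
          + ∑' i : ℕ, ‖y ^ (i + N) • (L (i + N) - a p (i + N))‖ := hsplit.symm
      _ ≤ _ := add_le_add hhead htail
  -- conclude uniform convergence
  rw [Metric.tendstoUniformlyOn_iff]
  intro ε hε
  have htail0 : Tendsto (fun N : ℕ => 2 * M * q ^ N * (1 - q)⁻¹) atTop (nhds 0) := by
    have := (tendsto_pow_atTop_nhds_zero_of_lt_one hq0 hq1).const_mul (2 * M)
    simpa using this.mul_const (1 - q)⁻¹
  obtain ⟨N, hN⟩ := (htail0.eventually (gt_mem_nhds (half_pos hε))).exists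
  have hhead0 : Tendsto (fun p => ∑ n ∈ Finset.range N, ‖L n - a p n‖ * R' ^ n)
      atTop (nhds 0) := by
    have : Tendsto (fun p => ∑ n ∈ Finset.range N, ‖L n - a p n‖ * R' ^ n)
        atTop (nhds (∑ n ∈ Finset.range N, (0:ℝ))) := by
      apply tendsto_finset_sum
      intro n _
      have h1 : Tendsto (fun p => L n - a p n) atTop (nhds 0) := by
        simpa using (tendsto_const_nhds (x := L n)).sub (hL n)
      simpa using (h1.norm.mul_const (R' ^ n))
    simpa using this
  filter_upwards [hhead0.eventually (gt_mem_nhds (half_pos hε))] with p hp z hz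
  rw [dist_eq_norm]
  calc ‖G z - f p z‖ ≤ (∑ n ∈ Finset.range N, ‖L n - a p n‖ * R' ^ n)
        + 2 * M * q ^ N * (1 - q)⁻¹ := key N p z hz
    _ < ε / 2 + ε / 2 := add_lt_add hp hN
    _ = ε := add_halves ε

open Metric in
/-- Normal family argument: if `(f_p)` are analytic on ℂ⁺ with the uniform bound
`|f_p(z)| ≤ C/Im z`, and converge pointwise on the region `{|Re z| ≤ Im z, Im z > T}`,
then they converge pointwise on all of ℂ⁺ to an analytic function, uniformly on every
compact subset of ℂ⁺. -/
theorem stmt_15 (f : ℕ → ℂ → ℂ) (C T : ℝ) (hT : 0 < T)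
    (han : ∀ p, DifferentiableOn ℂ (f p) {z : ℂ | 0 < z.im})
    (hbd : ∀ p, ∀ z : ℂ, 0 < z.im → ‖f p z‖ ≤ C / z.im)
    (hconv : ∀ z : ℂ, |z.re| ≤ z.im → T < z.im → ∃ l : ℂ, Tendsto (fun p => f p z) atTop (nhds l)) :
    ∃ g : ℂ → ℂ, DifferentiableOn ℂ g {z : ℂ | 0 < z.im}
      ∧ (∀ z : ℂ, 0 < z.im → Tendsto (fun p => f p z) atTop (nhds (g z)))
      ∧ ∀ K : Set ℂ, K ⊆ {z : ℂ | 0 < z.im} → IsCompact K →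
          TendstoUniformlyOn (fun p => f p) g atTop K := by
  have hC : 0 ≤ C := by
    have := hbd 0 I (by simp)
    simp only [Complex.I_im, div_one] at this
    exact (norm_nonneg _).trans this
  have hopen : IsOpen {z : ℂ | 0 < z.im} := isOpen_lt continuous_const Complex.continuous_im
  -- main compact lemma
  have main : ∀ K : Set ℂ, K ⊆ {z : ℂ | 0 < z.im} → IsCompact K →
      ∃ G : ℂ → ℂ, TendstoUniformlyOn (fun p => f p) G atTop K := by
    intro K hKH hK
    rcases K.eq_empty_or_nonempty with rfl | hne
    · exact ⟨0, tendstoUniformlyOn_empty⟩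
    obtain ⟨z₀, hz₀K, hmin⟩ := hK.exists_isMinOn hne Complex.continuous_im.continuousOn
    obtain ⟨δ, hδdef⟩ : ∃ δ : ℝ, δ = z₀.im := ⟨_, rfl⟩
    have hδ : 0 < δ := by rw [hδdef]; exact hKH hz₀K
    obtain ⟨B, hB⟩ := hK.isBounded.exists_norm_le
    have hB0 : 0 ≤ B := (norm_nonneg z₀).trans (hB z₀ hz₀K)
    obtain ⟨s, hs⟩ : ∃ s : ℝ, s = B ^ 2 / δ + 2 * T + δ + 1 := ⟨_, rfl⟩
    have hdiv0 : 0 ≤ B ^ 2 / δ := div_nonneg (sq_nonneg B) hδ.le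
    have hs0 : 0 < s := by rw [hs]; positivity
    have hsδ : δ ≤ s := by rw [hs]; linarith
    have hsT : 4 * T / 3 < s := by rw [hs]; linarith
    have hsB : B ^ 2 ≤ s * δ := by
      have h1 : B ^ 2 / δ * δ = B ^ 2 := div_mul_cancel₀ _ hδ.ne'
      have h2 : s * δ = B ^ 2 / δ * δ + (2 * T + δ + 1) * δ := by rw [hs]; ring
      nlinarith [mul_pos (show (0:ℝ) < 2 * T + δ + 1 by linarith) hδ]
    obtain ⟨c, hc⟩ : ∃ c : ℂ, c = (s : ℂ) * I := ⟨_, rfl⟩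
    have hcre : c.re = 0 := by rw [hc]; simp
    have hcim : c.im = s := by rw [hc]; simp
    obtain ⟨r, hr⟩ : ∃ r : ℝ, r = s / 4 := ⟨_, rfl⟩
    obtain ⟨R, hR⟩ : ∃ R : ℝ, R = s - δ / 4 := ⟨_, rfl⟩
    obtain ⟨R', hR'⟩ : ∃ R' : ℝ, R' = s - δ / 2 := ⟨_, rfl⟩
    have hr0 : 0 < r := by rw [hr]; positivity
    have hrR : r < R := by rw [hr, hR]; linarith
    have hR'0 : (0:ℝ) ≤ R' := by rw [hR']; linarith
    have hR'R : R' < R := by rw [hR', hR]; linarith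
    have hM0 : (0:ℝ) ≤ 4 * C / δ := by positivity
    -- closedBall c R ⊆ upper half plane, with im ≥ δ/4
    have him : ∀ z ∈ closedBall c R, δ / 4 ≤ z.im := by
      intro z hz
      have h1 : |(z - c).im| ≤ ‖z - c‖ := Complex.abs_im_le_norm _
      have h2 : ‖z - c‖ ≤ R := by rwa [mem_closedBall, Complex.dist_eq] at hz
      have h3 : (z - c).im = z.im - s := by simp [Complex.sub_im, hcim]
      have := (abs_le.1 (h1.trans h2)).1
      rw [h3] at this
      linarith [this, show s - R = δ / 4 by rw [hR]; ring]
    have hsub : closedBall c R ⊆ {z : ℂ | 0 < z.im} := by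
      intro z hz
      have := him z hz
      simp only [Set.mem_setOf_eq]
      linarith
    obtain ⟨G, hG⟩ := ball_uniform_conv f c r R R' (4 * C / δ) hr0 hrR hR'0 hR'R hM0
      (fun p => (han p).mono hsub)
      (by
        intro p z hz
        have h1 := hbd p z (hsub hz)
        have h2 := him z hz
        calc ‖f p z‖ = ‖f p z‖ := rfl
          _ ≤ C / z.im := h1
          _ ≤ C / (δ / 4) := by
              apply div_le_div_of_nonneg_left hC (by positivity) h2
          _ = 4 * C / δ := by rw [div_div_eq_mul_div, mul_comm])
      (by
        intro θ
        apply hconv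
        · -- |re| ≤ im on circle of radius r around c
          have h1 : |(circleMap c r θ - c).re| ≤ ‖circleMap c r θ - c‖ :=
            Complex.abs_re_le_norm _
          have h2 : |(circleMap c r θ - c).im| ≤ ‖circleMap c r θ - c‖ :=
            Complex.abs_im_le_norm _
          have h3 : ‖circleMap c r θ - c‖ = r := by
            rw [circleMap_sub_center, norm_circleMap_zero, abs_of_pos hr0]
          have h4 : (circleMap c r θ - c).re = (circleMap c r θ).re := by
            rw [Complex.sub_re, hcre, sub_zero]
          have h5 : (circleMap c r θ - c).im = (circleMap c r θ).im - s := by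
            rw [Complex.sub_im, hcim]
          rw [h3] at h1 h2
          rw [h4] at h1
          rw [h5] at h2
          have h6 := (abs_le.1 h2).1
          have : s - r ≤ (circleMap c r θ).im := by linarith
          have hr2 : r ≤ s - r := by rw [hr]; linarith
          linarith
        · -- T < im on circle
          have h2 : |(circleMap c r θ - c).im| ≤ ‖circleMap c r θ - c‖ :=
            Complex.abs_im_le_norm _
          have h3 : ‖circleMap c r θ - c‖ = r := by
            rw [circleMap_sub_center, norm_circleMap_zero, abs_of_pos hr0]
          have h5 : (circleMap c r θ - c).im = (circleMap c r θ).im - s := by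
            rw [Complex.sub_im, hcim]
          rw [h3, h5] at h2
          have h6 := (abs_le.1 h2).1
          have h7 : s - r = 3 * s / 4 := by rw [hr]; ring
          have h8 : T < 3 * s / 4 := by linarith
          linarith)
    refine ⟨G, hG.mono ?_⟩
    -- K ⊆ closedBall c R'
    intro z hz
    have him2 : δ ≤ z.im := by rw [hδdef]; exact hmin hz
    have hnz : ‖z‖ ≤ B := hB z hz
    rw [mem_closedBall, Complex.dist_eq, Complex.norm_def]
    have hnormsq : Complex.normSq (z - c) = z.re ^ 2 + (z.im - s) ^ 2 := by
      rw [Complex.normSq_apply, Complex.sub_re, Complex.sub_im, hcre, hcim]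
      ring
    have hresq : z.re ^ 2 + z.im ^ 2 ≤ B ^ 2 := by
      have h1 : ‖z‖ ≤ B := hnz
      have h2 : ‖z‖ ^ 2 = z.re ^ 2 + z.im ^ 2 := by
        rw [Complex.sq_norm, Complex.normSq_apply]; ring
      nlinarith [norm_nonneg z]
    have hkey : Complex.normSq (z - c) ≤ R' ^ 2 := by
      rw [hnormsq, hR']
      nlinarith [mul_le_mul_of_nonneg_left him2 hs0.le, hresq, hsB, hδ.le, hs0.le,
        sq_nonneg (z.im - δ)]
    calc Real.sqrt (Complex.normSq (z - c)) ≤ Real.sqrt (R' ^ 2) :=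
        Real.sqrt_le_sqrt hkey
      _ = R' := by rw [Real.sqrt_sq hR'0]
  -- pointwise limit
  have hptw : ∀ z : ℂ, 0 < z.im → ∃ l : ℂ, Tendsto (fun p => f p z) atTop (nhds l) := by
    intro z hz
    obtain ⟨G, hG⟩ := main {z} (by simpa using hz) isCompact_singleton
    exact ⟨G z, hG.tendsto_at rfl⟩
  set g : ℂ → ℂ := fun z => limUnder atTop (fun p => f p z) with hgdef
  have hg : ∀ z : ℂ, 0 < z.im → Tendsto (fun p => f p z) atTop (nhds (g z)) := by
    intro z hz
    obtain ⟨l, hl⟩ := hptw z hz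
    have : g z = l := hl.limUnder_eq
    rwa [this]
  have third : ∀ K : Set ℂ, K ⊆ {z : ℂ | 0 < z.im} → IsCompact K →
      TendstoUniformlyOn (fun p => f p) g atTop K := by
    intro K hKH hK
    obtain ⟨G, hG⟩ := main K hKH hK
    exact hG.congr_right fun z hz =>
      tendsto_nhds_unique (hG.tendsto_at hz) (hg z (hKH hz))
  refine ⟨g, ?_, hg, third⟩
  have hlu : TendstoLocallyUniformlyOn (fun p => f p) g atTop {z : ℂ | 0 < z.im} :=
    (tendstoLocallyUniformlyOn_iff_forall_isCompact hopen).2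
      fun K hK1 hK2 => third K hK1 hK2
  exact hlu.differentiableOn (Eventually.of_forall han) hopen
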